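/- Let D = ((x_1,y_1),…,(x_n,y_n)) be a dataset of size n ≥ 1 with binary labels and 0-1 loss, f : X → Bool a fixed model, G a set of groups, H a set of models, and define Φ(g,h) := (1/n) Σ_{i=1}^n 1[g x_i = true]·(1[f x_i ≠ y_i] − 1[h x_i ≠ y_i]). Fix ε > 0 and let (g_0,h_0), (g_1,h_1), …, (g_T,h_T) ∈ G × H be a sequence such that for each 0 ≤ k < T: h_{k+1} maximizes Φ(g_k, ·) over H, g_{k+1} maximizes Φ(·, h_{k+1}) over G, and Φ(g_{k+1}, h_{k+1}) ≥ Φ(g_k, h_k) + ε. Then: (i) T ≤ 2/ε; and (ii) if T ≥ 1 and, for some h' maximizing Φ(g_T, ·) over H and some g' maximizing Φ(·, h') over G, one has Φ(g', h') < Φ(g_T, h_T) + ε, then for every h ∈ H, Φ(g_T, h) ≤ Φ(g_T, h_T) + ε, and for every g ∈ G, Φ(g, h_T) ≤ Φ(g_T, h_T). -/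
import Mathlib


/-- `Φ(g,h) = (1/n) Σ_i 1[g x_i]·(1[f x_i ≠ y_i] − 1[h x_i ≠ y_i])`, the (signed,
unnormalized) improvement of the model `h` over the fixed model `f` on the group `g`. -/
noncomputable def Phi {X : Type} {n : ℕ} (D : Fin n → X × Bool) (f : X → Bool)
    (g : X → Bool) (h : X → Bool) : ℝ :=
  (1 / n : ℝ) * ∑ i : Fin n,
    if g (D i).1 = true then
      (if f (D i).1 ≠ (D i).2 then (1 : ℝ) else 0)
        - (if h (D i).1 ≠ (D i).2 then (1 : ℝ) else 0)
    else 0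

lemma Phi_abs_le_one {X : Type} {n : ℕ} (hn : 1 ≤ n) (D : Fin n → X × Bool)
    (f g h : X → Bool) : |Phi D f g h| ≤ 1 := by
  have hn' : (0 : ℝ) < n := by exact_mod_cast hn
  unfold Phi
  rw [abs_mul]
  have h1 : |(1 / n : ℝ)| = 1 / n := abs_of_pos (by positivity)
  rw [h1]
  have h2 : |∑ i : Fin n,
      if g (D i).1 = true then
        (if f (D i).1 ≠ (D i).2 then (1 : ℝ) else 0)
          - (if h (D i).1 ≠ (D i).2 then (1 : ℝ) else 0)
      else 0| ≤ (n : ℝ) := by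
    calc |∑ i : Fin n, _| ≤ ∑ i : Fin n, |if g (D i).1 = true then
        (if f (D i).1 ≠ (D i).2 then (1 : ℝ) else 0)
          - (if h (D i).1 ≠ (D i).2 then (1 : ℝ) else 0)
      else 0| := Finset.abs_sum_le_sum_abs _ _
    _ ≤ ∑ _i : Fin n, (1 : ℝ) := by
        apply Finset.sum_le_sum
        intro i _
        split_ifs <;> simp
    _ = (n : ℝ) := by simp
  calc (1 / n : ℝ) * |_| ≤ (1 / n : ℝ) * n := by
        apply mul_le_mul_of_nonneg_left h2 (by positivity)
    _ = 1 := by field_simp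

/-- alternating maximization. If each step strictly improves `Φ` by at least
`ε`, then (i) `T ≤ 2/ε`; and (ii) at an `ε`-approximate local optimum (witnessed by
maximizers `h'` over `H` and `g'` over `G` with `Φ(g',h') < Φ(g_T,h_T) + ε`), no unilateral
change of `h` improves `Φ(g_T, ·)` by more than `ε`, and no unilateral change of `g`
improves `Φ(·, h_T)` at all. -/
theorem stmt_16 {X : Type} (n : ℕ) (hn : 1 ≤ n) (D : Fin n → X × Bool) (f : X → Bool)
    (G H : Set (X → Bool)) (ε : ℝ) (hε : 0 < ε) (T : ℕ)
    (gs hs : ℕ → X → Bool)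
    (hmem : ∀ k ≤ T, gs k ∈ G ∧ hs k ∈ H)
    (hstep : ∀ k < T,
      (∀ h ∈ H, Phi D f (gs k) h ≤ Phi D f (gs k) (hs (k + 1))) ∧
      (∀ g ∈ G, Phi D f g (hs (k + 1)) ≤ Phi D f (gs (k + 1)) (hs (k + 1))) ∧
      Phi D f (gs k) (hs k) + ε ≤ Phi D f (gs (k + 1)) (hs (k + 1))) :
    (T : ℝ) ≤ 2 / ε
    ∧ (1 ≤ T →
        ∀ h' : X → Bool, h' ∈ H → (∀ h ∈ H, Phi D f (gs T) h ≤ Phi D f (gs T) h') →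
        ∀ g' : X → Bool, g' ∈ G → (∀ g ∈ G, Phi D f g h' ≤ Phi D f g' h') →
        Phi D f g' h' < Phi D f (gs T) (hs T) + ε →
        (∀ h ∈ H, Phi D f (gs T) h ≤ Phi D f (gs T) (hs T) + ε)
          ∧ (∀ g ∈ G, Phi D f g (hs T) ≤ Phi D f (gs T) (hs T))) := by
  have key : ∀ k ≤ T, Phi D f (gs 0) (hs 0) + k * ε ≤ Phi D f (gs k) (hs k) := by
    intro k hk
    induction k with
    | zero => simp
    | succ m ih =>
        have hm : m ≤ T := Nat.le_of_succ_le hk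
        have hmT : m < T := hk
        have := (hstep m hmT).2.2
        have ih' := ih hm
        push_cast
        linarith
  constructor
  · have hT := key T le_rfl
    have b0 := Phi_abs_le_one hn D f (gs 0) (hs 0)
    have bT := Phi_abs_le_one hn D f (gs T) (hs T)
    rw [abs_le] at b0 bT
    have hTε : (T : ℝ) * ε ≤ 2 := by linarith
    rw [le_div_iff₀ hε]
    linarith
  · intro hT1 h' hh' hmax g' hg' gmax hlt
    constructor
    · intro h hh
      have h1 : Phi D f (gs T) h ≤ Phi D f (gs T) h' := hmax h hh
      have h2 : Phi D f (gs T) h' ≤ Phi D f g' h' := gmax (gs T) (hmem T le_rfl).1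
      linarith
    · intro g hg
      obtain ⟨m, rfl⟩ : ∃ m, T = m + 1 := ⟨T - 1, by omega⟩
      exact (hstep m (Nat.lt_succ_self m)).2.1 g hg
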